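/- Let k be a field and q ∈ k nonzero, char k = 0. The linear map λ : k[X] ⊗ kℤ → k determined by λ(Xᵐ, gᵗ) = tᵐ (with the convention t⁰ = 1 even for t = 0) is a skew pairing between the polynomial Hopf algebra k[X] (with X primitive) and the group Hopf algebra kℤ. -/

import Mathlib

open TensorProduct Coalgebra LinearMap Finset HopfAlgebra

noncomputable section

variable {k : Type} [Field k]

/-- Representations of `comul a` with index type in `Type 0`. -/
structure Repr0 (k : Type) [CommSemiring k] {A : Type} [AddCommMonoid A] [Module k A]
    [CoalgebraStruct k A] (a : A) where
  {ι : Type}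
  index : Finset ι
  left : ι → A
  right : ι → A
  eq : ∑ i ∈ index, left i ⊗ₜ[k] right i = CoalgebraStruct.comul a

/-- A skew pairing `λ : A ⊗ H → k` (given as a bilinear map), satisfying (BR1)–(BR4),
with Sweedler sums expressed via arbitrary representations of the comultiplication. -/
structure IsSkewPairing {A H : Type} [Ring A] [Ring H]
    [Bialgebra k A] [Bialgebra k H] (lam : A →ₗ[k] H →ₗ[k] k) : Prop where
  br1 : ∀ (x y : A) (z : H) (rz : Repr0 k z),
    lam (x * y) z = ∑ i ∈ rz.index, lam x (rz.left i) * lam y (rz.right i)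
  br2 : ∀ z : H, lam 1 z = counit (R := k) z
  br3 : ∀ (x : A) (l z : H) (rx : Repr0 k x),
    lam x (l * z) = ∑ i ∈ rx.index, lam (rx.left i) z * lam (rx.right i) l
  br4 : ∀ y : A, lam y 1 = counit (R := k) y

/-- A coquasitriangular (braided) structure on a bialgebra `H` : (BR1)–(BR5). -/
structure IsCQT {H : Type} [Ring H] [Bialgebra k H]
    (p : H →ₗ[k] H →ₗ[k] k) : Prop extends IsSkewPairing p where
  br5 : ∀ (x y : H) (rx : Repr0 k x) (ry : Repr0 k y),
    ∑ i ∈ rx.index, ∑ j ∈ ry.index, p (rx.left i) (ry.left j) • (rx.right i * ry.right j)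
    = ∑ i ∈ rx.index, ∑ j ∈ ry.index, p (rx.right i) (ry.right j) • (ry.left j * rx.left i)

/-- Coquasitriangularity (BR1)–(BR5) for a coalgebra `D` equipped with a (not necessarily
associative, not necessarily typeclass-registered) multiplication `mul` and unit `one`. -/
structure IsCQTMul {D : Type} [AddCommGroup D] [Module k D] [Coalgebra k D]
    (mul : D →ₗ[k] D →ₗ[k] D) (one : D) (σ : D →ₗ[k] D →ₗ[k] k) : Prop where
  br1 : ∀ (x y z : D) (rz : Repr0 k z),
    σ (mul x y) z = ∑ i ∈ rz.index, σ x (rz.left i) * σ y (rz.right i)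
  br2 : ∀ z : D, σ one z = counit (R := k) z
  br3 : ∀ (x l z : D) (rx : Repr0 k x),
    σ x (mul l z) = ∑ i ∈ rx.index, σ (rx.left i) z * σ (rx.right i) l
  br4 : ∀ y : D, σ y one = counit (R := k) y
  br5 : ∀ (x y : D) (rx : Repr0 k x) (ry : Repr0 k y),
    ∑ i ∈ rx.index, ∑ j ∈ ry.index, σ (rx.left i) (ry.left j) • mul (rx.right i) (ry.right j)
    = ∑ i ∈ rx.index, ∑ j ∈ ry.index, σ (rx.right i) (ry.right j) • mul (ry.left j) (rx.left i)

/-- A matched pair of bialgebras `(A, H, ⊳, ⊲)` : `lact = ⊳ : H ⊗ A → A` is a left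
`H`-module coalgebra structure, `ract = ⊲ : H ⊗ A → H` is a right `A`-module coalgebra
structure, together with the matched pair compatibility conditions. -/
structure IsMatchedPair {A H : Type} [Ring A] [Ring H] [Bialgebra k A] [Bialgebra k H]
    (lact : H →ₗ[k] A →ₗ[k] A) (ract : H →ₗ[k] A →ₗ[k] H) : Prop where
  ract_unit : ∀ h : H, ract h 1 = h
  ract_act : ∀ (h : H) (a b : A), ract h (a * b) = ract (ract h a) b
  ract_comul : ∀ (h : H) (a : A) (rh : Repr0 k h) (ra : Repr0 k a),
    comul (R := k) (ract h a)
      = ∑ i ∈ rh.index, ∑ j ∈ ra.index,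
          ract (rh.left i) (ra.left j) ⊗ₜ[k] ract (rh.right i) (ra.right j)
  ract_counit : ∀ (h : H) (a : A),
    counit (R := k) (ract h a) = counit (R := k) h * counit (R := k) a
  lact_unit : ∀ a : A, lact 1 a = a
  lact_act : ∀ (g h : H) (a : A), lact (g * h) a = lact g (lact h a)
  lact_comul : ∀ (h : H) (a : A) (rh : Repr0 k h) (ra : Repr0 k a),
    comul (R := k) (lact h a)
      = ∑ i ∈ rh.index, ∑ j ∈ ra.index,
          lact (rh.left i) (ra.left j) ⊗ₜ[k] lact (rh.right i) (ra.right j)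
  lact_counit : ∀ (h : H) (a : A),
    counit (R := k) (lact h a) = counit (R := k) h * counit (R := k) a
  lact_mul : ∀ (h : H) (a b : A) (rh : Repr0 k h) (ra : Repr0 k a),
    lact h (a * b) = ∑ i ∈ rh.index, ∑ j ∈ ra.index,
      lact (rh.left i) (ra.left j) * lact (ract (rh.right i) (ra.right j)) b
  mul_ract : ∀ (g h : H) (a : A) (rh : Repr0 k h) (ra : Repr0 k a),
    ract (g * h) a = ∑ i ∈ rh.index, ∑ j ∈ ra.index,
      ract g (lact (rh.left i) (ra.left j)) * ract (rh.right i) (ra.right j)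
  lact_one : ∀ h : H, lact h 1 = counit (R := k) h • (1 : A)
  one_ract : ∀ a : A, ract 1 a = counit (R := k) a • (1 : H)
  sym : ∀ (h : H) (a : A) (rh : Repr0 k h) (ra : Repr0 k a),
    ∑ i ∈ rh.index, ∑ j ∈ ra.index,
        ract (rh.left i) (ra.left j) ⊗ₜ[k] lact (rh.right i) (ra.right j)
    = ∑ i ∈ rh.index, ∑ j ∈ ra.index,
        ract (rh.right i) (ra.right j) ⊗ₜ[k] lact (rh.left i) (ra.left j)

/-- `mulD` is the double cross product multiplication
`(a ⊗ h)(b ⊗ g) = a(h₍₁₎ ⊳ b₍₁₎) ⊗ (h₍₂₎ ⊲ b₍₂₎)g` on `A ⊗ H`. -/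
def IsDCPMul {A H : Type} [Ring A] [Ring H] [Bialgebra k A] [Bialgebra k H]
    (lact : H →ₗ[k] A →ₗ[k] A) (ract : H →ₗ[k] A →ₗ[k] H)
    (mulD : A ⊗[k] H →ₗ[k] A ⊗[k] H →ₗ[k] A ⊗[k] H) : Prop :=
  ∀ (a b : A) (h g : H) (rh : Repr0 k h) (rb : Repr0 k b),
    mulD (a ⊗ₜ[k] h) (b ⊗ₜ[k] g) = ∑ i ∈ rh.index, ∑ j ∈ rb.index,
      (a * lact (rh.left i) (rb.left j)) ⊗ₜ[k] (ract (rh.right i) (rb.right j) * g)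

/-- The right action `h ⊲ a = h₍₂₎ λ⁻¹(h₍₁₎, a₍₁₎) λ(h₍₃₎, a₍₂₎)` induced by
a skew pairing `λ : H ⊗ A → k` (where `λ⁻¹ = λ ∘ (S_H ⊗ id)`). -/
def IsQDRact {A H : Type} [Ring A] [Ring H] [HopfAlgebra k A] [HopfAlgebra k H]
    (lam : H →ₗ[k] A →ₗ[k] k) (ract : H →ₗ[k] A →ₗ[k] H) : Prop :=
  ∀ (h : H) (a : A) (rh : Repr0 k h)
    (rh1 : ∀ i : rh.ι, Repr0 k (rh.left i)) (ra : Repr0 k a),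
    ract h a = ∑ i ∈ rh.index, ∑ j ∈ (rh1 i).index, ∑ l ∈ ra.index,
      (lam (antipode (R := k) ((rh1 i).left j)) (ra.left l) * lam (rh.right i) (ra.right l))
        • (rh1 i).right j

/-- The left action `h ⊳ a = a₍₂₎ λ⁻¹(h₍₁₎, a₍₁₎) λ(h₍₂₎, a₍₃₎)` induced by
a skew pairing `λ : H ⊗ A → k`. -/
def IsQDLact {A H : Type} [Ring A] [Ring H] [HopfAlgebra k A] [HopfAlgebra k H]
    (lam : H →ₗ[k] A →ₗ[k] k) (lact : H →ₗ[k] A →ₗ[k] A) : Prop :=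
  ∀ (h : H) (a : A) (rh : Repr0 k h) (ra : Repr0 k a)
    (ra1 : ∀ l : ra.ι, Repr0 k (ra.left l)),
    lact h a = ∑ i ∈ rh.index, ∑ l ∈ ra.index, ∑ j ∈ (ra1 l).index,
      (lam (antipode (R := k) (rh.left i)) ((ra1 l).left j) * lam (rh.right i) (ra.right l))
        • (ra1 l).right j

/-- `σ(a ⊗ h, b ⊗ g) = u(a₍₁₎, g₍₁₎) p(a₍₂₎, b₍₁₎) τ(h₍₁₎, g₍₂₎) v(h₍₂₎, b₍₂₎)`. -/
def IsSigma {A H : Type} [Ring A] [Ring H] [Bialgebra k A] [Bialgebra k H]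
    (u : A →ₗ[k] H →ₗ[k] k) (p : A →ₗ[k] A →ₗ[k] k)
    (τ : H →ₗ[k] H →ₗ[k] k) (v : H →ₗ[k] A →ₗ[k] k)
    (σ : A ⊗[k] H →ₗ[k] A ⊗[k] H →ₗ[k] k) : Prop :=
  ∀ (a b : A) (h g : H) (ra : Repr0 k a) (rb : Repr0 k b)
    (rh : Repr0 k h) (rg : Repr0 k g),
    σ (a ⊗ₜ[k] h) (b ⊗ₜ[k] g) = ∑ m ∈ ra.index, ∑ n ∈ rb.index, ∑ i ∈ rh.index, ∑ j ∈ rg.index,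
      u (ra.left m) (rg.left j) * p (ra.right m) (rb.left n)
        * τ (rh.left i) (rg.right j) * v (rh.right i) (rb.right n)


section AuxSkew

variable {k : Type} [Field k]

lemma sum_repr_eq_lift' {D : Type} [AddCommGroup D] [Module k D] [Coalgebra k D]
    {z : D} (r : Repr0 k z) (f : D →ₗ[k] D →ₗ[k] k) :
    ∑ i ∈ r.index, f (r.left i) (r.right i)
      = TensorProduct.lift f (Coalgebra.comul (R := k) z) := by
  rw [← r.eq, map_sum]
  simp

lemma comul_gpow' {C : Type} [CommRing C] [HopfAlgebra k C] (g : Cˣ)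
    (hgΔ : comul (R := k) (g : C) = (g : C) ⊗ₜ[k] (g : C)) (t : ℤ) :
    comul (R := k) ((g ^ t : Cˣ) : C) = ((g ^ t : Cˣ) : C) ⊗ₜ[k] ((g ^ t : Cˣ) : C) := by
  let d : C →* C ⊗[k] C :=
    { toFun := fun c => c ⊗ₜ[k] c
      map_one' := rfl
      map_mul' := fun a b => by rw [Algebra.TensorProduct.tmul_mul_tmul] }
  let φ : C →* C ⊗[k] C := (Bialgebra.comulAlgHom k C : C →+* C ⊗[k] C).toMonoidHom
  have h1 : Units.map φ g = Units.map d g := by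
    ext
    simpa [φ, d, Bialgebra.comulAlgHom_apply] using hgΔ
  have h2 : Units.map φ (g ^ t) = Units.map d (g ^ t) := by
    rw [map_zpow, map_zpow, h1]
  have h3 := congrArg Units.val h2
  rw [Units.coe_map, Units.coe_map] at h3
  exact h3

lemma counit_gpow' {C : Type} [CommRing C] [HopfAlgebra k C] (g : Cˣ)
    (hgε : counit (R := k) (g : C) = 1) (t : ℤ) :
    counit (R := k) ((g ^ t : Cˣ) : C) = 1 := by
  let e : C →* k := (Bialgebra.counitAlgHom k C : C →+* k).toMonoidHom
  have h1 : Units.map e g = 1 := by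
    ext
    simpa [e, Bialgebra.counitAlgHom_apply] using hgε
  have h2 : Units.map e (g ^ t) = 1 := by
    rw [map_zpow, h1, one_zpow]
  have h3 := congrArg Units.val h2
  rw [Units.coe_map, Units.val_one] at h3
  exact h3

lemma comul_xpow' {P : Type} [CommRing P] [HopfAlgebra k P] (x : P)
    (hxΔ : comul (R := k) x = x ⊗ₜ[k] 1 + 1 ⊗ₜ[k] x) (m : ℕ) :
    comul (R := k) (x ^ m)
      = ∑ j ∈ Finset.range (m + 1), m.choose j • ((x ^ j) ⊗ₜ[k] (x ^ (m - j))) := by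
  have h : comul (R := k) (x ^ m) = (comul (R := k) x) ^ m := by
    rw [← Bialgebra.comulAlgHom_apply k, map_pow, Bialgebra.comulAlgHom_apply]
  rw [h, hxΔ, add_pow]
  refine Finset.sum_congr rfl fun j hj => ?_
  rw [Algebra.TensorProduct.tmul_pow, Algebra.TensorProduct.tmul_pow,
    Algebra.TensorProduct.tmul_mul_tmul, one_pow, one_pow, mul_one, one_mul,
    mul_comm, ← nsmul_eq_mul]

end AuxSkew

/-- `λ(Xᵐ, gᵗ) = tᵐ` is a skew pairing between the polynomial Hopf
algebra `k[X]` (with `X` primitive) and the group Hopf algebra `kℤ`. -/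
theorem polynomial_group_algebra_skew_pairing {k P C : Type} [Field k] [CharZero k]
    [CommRing P] [HopfAlgebra k P] [CommRing C] [HopfAlgebra k C]
    (q : k) (hq : q ≠ 0)
    (x : P) (hxΔ : comul (R := k) x = x ⊗ₜ[k] 1 + 1 ⊗ₜ[k] x)
    (hxε : counit (R := k) x = 0)
    (BP : Module.Basis ℕ k P) (hBP : ∀ n : ℕ, BP n = x ^ n)
    (g : Cˣ) (hgΔ : comul (R := k) (g : C) = (g : C) ⊗ₜ[k] (g : C))
    (hgε : counit (R := k) (g : C) = 1)
    (BC : Module.Basis ℤ k C) (hBC : ∀ t : ℤ, BC t = ((g ^ t : Cˣ) : C))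
    (lam : P →ₗ[k] C →ₗ[k] k)
    (hlam : ∀ (m : ℕ) (t : ℤ), lam (x ^ m) ((g ^ t : Cˣ) : C) = (t : k) ^ m) :
    IsSkewPairing lam := by
  -- multiplicativity of `lam · c` for group-like `c = g^t`
  have hmul : ∀ (a b : P) (t : ℤ),
      lam (a * b) ((g ^ t : Cˣ) : C)
        = lam a ((g ^ t : Cˣ) : C) * lam b ((g ^ t : Cˣ) : C) := by
    intro a b t
    set c : C := ((g ^ t : Cˣ) : C) with hc
    have hbil : (LinearMap.mul k P).compr₂ (lam.flip c)
        = (LinearMap.mul k k).compl₁₂ (lam.flip c) (lam.flip c) := by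
      refine Module.Basis.ext BP fun m => Module.Basis.ext BP fun n => ?_
      simp only [hBP, compr₂_apply, mul_apply', compl₁₂_apply, flip_apply, hc]
      rw [← pow_add, hlam, hlam, hlam, ← pow_add]
    have := LinearMap.congr_fun (LinearMap.congr_fun hbil a) b
    simpa using this
  -- multiplication of group-like elements
  have hgm : ∀ s t : ℤ, ((g ^ s : Cˣ) : C) * ((g ^ t : Cˣ) : C) = ((g ^ (s + t) : Cˣ) : C) := by
    intro s t
    rw [← Units.val_mul, ← zpow_add]
  constructor
  · -- br1
    intro a b z rz
    have hs := sum_repr_eq_lift' rz ((LinearMap.mul k k).compl₁₂ (lam a) (lam b))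
    simp only [compl₁₂_apply, mul_apply'] at hs
    rw [hs]
    have key : lam (a * b)
        = (TensorProduct.lift ((LinearMap.mul k k).compl₁₂ (lam a) (lam b))).comp
            (Coalgebra.comul (R := k)) := by
      refine Module.Basis.ext BC fun t => ?_
      rw [hBC]
      rw [LinearMap.comp_apply, comul_gpow' g hgΔ t]
      simp only [TensorProduct.lift.tmul, compl₁₂_apply, mul_apply']
      exact hmul a b t
    exact LinearMap.congr_fun key z
  · -- br2
    intro z
    have key : lam 1 = Coalgebra.counit (R := k) := by
      refine Module.Basis.ext BC fun t => ?_
      rw [hBC, counit_gpow' g hgε t, ← pow_zero x, hlam 0 t, pow_zero]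
    exact LinearMap.congr_fun key z
  · -- br3
    intro a l z ra
    have hs := sum_repr_eq_lift' ra ((LinearMap.mul k k).compl₁₂ (lam.flip z) (lam.flip l))
    simp only [compl₁₂_apply, mul_apply', flip_apply] at hs
    rw [hs]
    have key : lam.flip (l * z)
        = (TensorProduct.lift ((LinearMap.mul k k).compl₁₂ (lam.flip z) (lam.flip l))).comp
            (Coalgebra.comul (R := k)) := by
      refine Module.Basis.ext BP fun m => ?_
      rw [hBP, LinearMap.comp_apply, comul_xpow' x hxΔ m, map_sum]
      simp only [map_nsmul, TensorProduct.lift.tmul, compl₁₂_apply, flip_apply]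
      -- reduce to bilinear statement in (l, z)
      have hbil : (LinearMap.mul k C).compr₂ (lam (x ^ m))
          = ∑ j ∈ Finset.range (m + 1),
              (m.choose j : k) • ((LinearMap.mul k k).compl₁₂ (lam (x ^ j)) (lam (x ^ (m - j)))).flip := by
        refine Module.Basis.ext BC fun s => Module.Basis.ext BC fun t => ?_
        simp only [hBC, compr₂_apply, mul_apply', LinearMap.sum_apply, LinearMap.smul_apply,
          flip_apply, compl₁₂_apply, smul_eq_mul]
        rw [hgm s t, hlam m (s + t)]
        push_cast
        rw [add_comm (s : k) (t : k), add_pow]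
        refine Finset.sum_congr rfl fun j hj => ?_
        rw [hlam, hlam]
        ring
      have := LinearMap.congr_fun (LinearMap.congr_fun hbil l) z
      simp only [compr₂_apply, mul_apply', LinearMap.sum_apply, LinearMap.smul_apply,
        flip_apply, compl₁₂_apply, smul_eq_mul] at this
      rw [this]
      refine Finset.sum_congr rfl fun j hj => ?_
      rw [nsmul_eq_mul]
      simp only [mul_apply']
    exact LinearMap.congr_fun key a
  · -- br4
    intro a
    have key : lam.flip 1 = Coalgebra.counit (R := k) := by
      refine Module.Basis.ext BP fun m => ?_
      have h1 : (1 : C) = ((g ^ (0 : ℤ) : Cˣ) : C) := by rw [zpow_zero, Units.val_one]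
      have h2 : Coalgebra.counit (R := k) (x ^ m) = (0 : k) ^ m := by
        rw [← Bialgebra.counitAlgHom_apply k, map_pow, Bialgebra.counitAlgHom_apply, hxε]
      rw [hBP, flip_apply, h1, hlam m 0, h2, Int.cast_zero]
    exact LinearMap.congr_fun key a

end
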